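/- Suppressing a degree-2 vertex does not change the Fitch graph: let (T, λ) be an edge-labeled tree and let v be a vertex of T of degree exactly 2 with neighbors a and b. Let T' be the tree on the vertex set of T minus v obtained by deleting v and its two incident edges e' = {v,a} and e'' = {v,b} and adding the edge e = {a,b}, and let λ' agree with λ on all edges of T' other than e, with λ'(e) = 0 if λ(e') = λ(e'') = 0 and λ'(e) = 1 otherwise. Then T' is a tree with the same leaves as T, and the undirected Fitch graph explained by (T', λ') equals the undirected Fitch graph explained by (T, λ). -/

import Mathlib

open SimpleGraph

/-- A leaf of a graph is a vertex with exactly one neighbour (i.e. a vertex of degree 1). -/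
def SimpleGraph.IsLeaf {V : Type*} (T : SimpleGraph V) (v : V) : Prop :=
  ∃! u, T.Adj v u

/-- The undirected Fitch graph explained by an edge-labelled tree `(T, lam)`
(labels: `true` = 1, `false` = 0): its vertices are the leaves of `T`, and two
distinct leaves are adjacent iff the (unique) path between them in `T` contains
at least one edge labelled `1`. -/
def fitchGraph {V : Type*} (T : SimpleGraph V) (lam : Sym2 V → Bool) :
    SimpleGraph {v : V // T.IsLeaf v} where
  Adj x y := x ≠ y ∧ ∃ p : T.Walk x.1 y.1, p.IsPath ∧ ∃ e ∈ p.edges, lam e = true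
  symm := by
    constructor
    rintro x y ⟨hxy, p, hp, e, he, hl⟩
    exact ⟨hxy.symm, p.reverse, hp.reverse, e, by
      rw [SimpleGraph.Walk.edges_reverse]; exact List.mem_reverse.mpr he, hl⟩
  loopless := by constructor; rintro x ⟨hx, -⟩; exact hx rfl

/-- A graph is an undirected Fitch graph if it is isomorphic to the Fitch graph
explained by some edge-labelled finite tree. -/
def IsFitchGraph {W : Type*} (G : SimpleGraph W) : Prop :=
  ∃ (V : Type) (T : SimpleGraph V) (lam : Sym2 V → Bool),
    Finite V ∧ T.IsTree ∧ Nonempty (G ≃g fitchGraph T lam)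


section Aux
variable {V : Type*} {T : SimpleGraph V} {v a b : V} {T' : SimpleGraph {u : V // u ≠ v}}

variable (hT' : ∀ x y : {u : V // u ≠ v},
      T'.Adj x y ↔ (T.Adj x.1 y.1 ∨ (x.1 = a ∧ y.1 = b) ∨ (x.1 = b ∧ y.1 = a)))
  (hva : T.Adj v a) (hvb : T.Adj v b)

open Classical in
/-- Map a walk in `T'` to a walk in `T`, expanding the new edge `{a,b}` to `a-v-b`. -/
noncomputable def toT : ∀ {x y : {u : V // u ≠ v}}, T'.Walk x y → T.Walk x.1 y.1
  | _, _, .nil => .nil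
  | x, y, @Walk.cons _ _ _ w _ h q =>
    if hadj : T.Adj x.1 w.1 then .cons hadj (toT q)
    else
      have hcase : (x.1 = a ∧ w.1 = b) ∨ (x.1 = b ∧ w.1 = a) :=
        ((hT' x w).mp h).resolve_left hadj
      have h1 : T.Adj x.1 v := by
        rcases hcase with ⟨h1, h2⟩ | ⟨h1, h2⟩ <;> rw [h1]
        · exact hva.symm
        · exact hvb.symm
      have h2 : T.Adj v w.1 := by
        rcases hcase with ⟨h1, h2⟩ | ⟨h1, h2⟩ <;> rw [h2]
        · exact hvb
        · exact hva
      .cons h1 (.cons h2 (toT q))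

lemma mem_support_toT : ∀ {x y : {u : V // u ≠ v}} (p : T'.Walk x y) (u : V)
    (hu : u ≠ v), u ∈ (toT hT' hva hvb p).support → (⟨u, hu⟩ : {u : V // u ≠ v}) ∈ p.support
  | _, _, .nil, u, hu => by
    rw [toT]
    simp only [Walk.support_nil, List.mem_singleton]
    intro h
    exact Subtype.ext h
  | x, y, @Walk.cons _ _ _ w _ h q, u, hu => by
    rw [toT]
    split_ifs with hadj
    · simp only [Walk.support_cons, List.mem_cons]
      rintro (rfl | hm)
      · exact Or.inl (Subtype.ext rfl)
      · exact Or.inr (mem_support_toT q u hu hm)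
    · simp only [Walk.support_cons, List.mem_cons]
      rintro (rfl | rfl | hm)
      · exact Or.inl (Subtype.ext rfl)
      · exact absurd rfl hu
      · exact Or.inr (mem_support_toT q u hu hm)

lemma v_mem_support_toT (ha : a ≠ v) (hb : b ≠ v) :
    ∀ {x y : {u : V // u ≠ v}} (p : T'.Walk x y),
      v ∈ (toT hT' hva hvb p).support →
      s((⟨a, ha⟩ : {u : V // u ≠ v}), (⟨b, hb⟩ : {u : V // u ≠ v})) ∈ p.edges
  | _, y, .nil => by
    rw [toT]; simp only [Walk.support_nil, List.mem_singleton]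
    intro h; exact absurd h.symm y.2
  | x, y, @Walk.cons _ _ _ w _ h q => by
    rw [toT]
    split_ifs with hadj
    · simp only [Walk.support_cons, List.mem_cons, Walk.edges_cons]
      rintro (hv | hm)
      · exact absurd hv.symm x.2
      · exact Or.inr (v_mem_support_toT ha hb q hm)
    · simp only [Walk.support_cons, List.mem_cons, Walk.edges_cons]
      intro _
      rcases ((hT' x w).mp h).resolve_left hadj with ⟨h1, h2⟩ | ⟨h1, h2⟩
      · have hx : x = ⟨a, ha⟩ := Subtype.ext h1
        have hw : w = ⟨b, hb⟩ := Subtype.ext h2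
        left; rw [hx, hw]
      · have hx : x = ⟨b, hb⟩ := Subtype.ext h1
        have hw : w = ⟨a, ha⟩ := Subtype.ext h2
        left; rw [hx, hw]; exact Sym2.eq_swap

lemma toT_isPath : ∀ {x y : {u : V // u ≠ v}} (p : T'.Walk x y),
    p.IsPath → (toT hT' hva hvb p).IsPath
  | _, _, .nil, _ => by rw [toT]; exact Walk.IsPath.nil
  | x, y, @Walk.cons _ _ _ w _ h q, hp => by
    have hq : q.IsPath := hp.of_cons
    have hxq : x ∉ q.support := (Walk.cons_isPath_iff h q).mp hp |>.2
    have hx1 : x.1 ∉ (toT hT' hva hvb q).support := fun hm =>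
      hxq (mem_support_toT hT' hva hvb q x.1 x.2 hm)
    rw [toT]
    split_ifs with hadj
    · rw [Walk.cons_isPath_iff]
      exact ⟨toT_isPath q hq, hx1⟩
    · have ha : a ≠ v := hva.ne'
      have hb : b ≠ v := hvb.ne'
      have hvq : v ∉ (toT hT' hva hvb q).support := by
        intro hm
        have he := v_mem_support_toT hT' hva hvb ha hb q hm
        have htrail := hp.isTrail.edges_nodup
        rw [Walk.edges_cons, List.nodup_cons] at htrail
        apply htrail.1
        rcases ((hT' x w).mp h).resolve_left hadj with ⟨h1, h2⟩ | ⟨h1, h2⟩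
        · have hx : x = ⟨a, ha⟩ := Subtype.ext h1
          have hw : w = ⟨b, hb⟩ := Subtype.ext h2
          subst hx hw; exact he
        · have hx : x = ⟨b, hb⟩ := Subtype.ext h1
          have hw : w = ⟨a, ha⟩ := Subtype.ext h2
          subst hx hw; rw [Sym2.eq_swap]; exact he
      rw [Walk.cons_isPath_iff, Walk.cons_isPath_iff]
      refine ⟨⟨toT_isPath q hq, hvq⟩, ?_⟩
      simp only [Walk.support_cons, List.mem_cons]
      push_neg
      exact ⟨fun hxv => x.2 hxv, hx1⟩

lemma toT_label_iff (lam : Sym2 V → Bool) (lam' : Sym2 {u : V // u ≠ v} → Bool)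
    (hlam'₁ : ∀ x y : {u : V // u ≠ v}, T.Adj x.1 y.1 → lam' s(x, y) = lam s(x.1, y.1))
    (hlam'₂ : ∀ (ha : a ≠ v) (hb : b ≠ v),
      lam' s(⟨a, ha⟩, ⟨b, hb⟩) = (lam s(v, a) || lam s(v, b))) :
    ∀ {x y : {u : V // u ≠ v}} (p : T'.Walk x y),
      (∃ e ∈ p.edges, lam' e = true) ↔ (∃ e ∈ (toT hT' hva hvb p).edges, lam e = true)
  | _, _, .nil => by rw [toT]; simp
  | x, y, @Walk.cons _ _ _ w _ h q => by
    have hIH := toT_label_iff lam lam' hlam'₁ hlam'₂ q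
    rw [toT]
    split_ifs with hadj
    · simp only [Walk.edges_cons, List.mem_cons]
      constructor
      · rintro ⟨e, (rfl | he), hl⟩
        · exact ⟨s(x.1, w.1), Or.inl rfl, by rw [← hlam'₁ x w hadj]; exact hl⟩
        · obtain ⟨e', he', hl'⟩ := hIH.mp ⟨e, he, hl⟩
          exact ⟨e', Or.inr he', hl'⟩
      · rintro ⟨e, (rfl | he), hl⟩
        · exact ⟨s(x, w), Or.inl rfl, by rw [hlam'₁ x w hadj]; exact hl⟩
        · obtain ⟨e', he', hl'⟩ := hIH.mpr ⟨e, he, hl⟩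
          exact ⟨e', Or.inr he', hl'⟩
    · have ha : a ≠ v := hva.ne'
      have hb : b ≠ v := hvb.ne'
      have hsw : lam' s(x, w) = (lam s(v, a) || lam s(v, b)) ∧
          ((s(x.1, v) : Sym2 V) = s(v, a) ∧ (s(v, w.1) : Sym2 V) = s(v, b) ∨
           (s(x.1, v) : Sym2 V) = s(v, b) ∧ (s(v, w.1) : Sym2 V) = s(v, a)) := by
        rcases ((hT' x w).mp h).resolve_left hadj with ⟨h1, h2⟩ | ⟨h1, h2⟩
        · have hx : x = ⟨a, ha⟩ := Subtype.ext h1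
          have hw : w = ⟨b, hb⟩ := Subtype.ext h2
          subst hx hw
          exact ⟨hlam'₂ ha hb, Or.inl ⟨Sym2.eq_swap, rfl⟩⟩
        · have hx : x = ⟨b, hb⟩ := Subtype.ext h1
          have hw : w = ⟨a, ha⟩ := Subtype.ext h2
          subst hx hw
          refine ⟨?_, Or.inr ⟨Sym2.eq_swap, rfl⟩⟩
          rw [Sym2.eq_swap]; exact hlam'₂ ha hb
      obtain ⟨hsw1, hsw2⟩ := hsw
      simp only [Walk.edges_cons, List.mem_cons]
      constructor
      · rintro ⟨e, (rfl | he), hl⟩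
        · rw [hsw1, Bool.or_eq_true] at hl
          rcases hsw2 with ⟨e1, e2⟩ | ⟨e1, e2⟩ <;> rcases hl with hl | hl
          · exact ⟨s(x.1, v), Or.inl rfl, by rw [e1]; exact hl⟩
          · exact ⟨s(v, w.1), Or.inr (Or.inl rfl), by rw [e2]; exact hl⟩
          · exact ⟨s(v, w.1), Or.inr (Or.inl rfl), by rw [e2]; exact hl⟩
          · exact ⟨s(x.1, v), Or.inl rfl, by rw [e1]; exact hl⟩
        · obtain ⟨e', he', hl'⟩ := hIH.mp ⟨e, he, hl⟩
          exact ⟨e', Or.inr (Or.inr he'), hl'⟩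
      · rintro ⟨e, (rfl | rfl | he), hl⟩
        · refine ⟨s(x, w), Or.inl rfl, ?_⟩
          rw [hsw1, Bool.or_eq_true]
          rcases hsw2 with ⟨e1, e2⟩ | ⟨e1, e2⟩
          · exact Or.inl (by rw [← e1]; exact hl)
          · exact Or.inr (by rw [← e1]; exact hl)
        · refine ⟨s(x, w), Or.inl rfl, ?_⟩
          rw [hsw1, Bool.or_eq_true]
          rcases hsw2 with ⟨e1, e2⟩ | ⟨e1, e2⟩
          · exact Or.inr (by rw [← e2]; exact hl)
          · exact Or.inl (by rw [← e2]; exact hl)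
        · obtain ⟨e', he', hl'⟩ := hIH.mpr ⟨e, he, hl⟩
          exact ⟨e', Or.inr he', hl'⟩

lemma toT_injective : ∀ {x y : {u : V // u ≠ v}} (p q : T'.Walk x y),
    toT hT' hva hvb p = toT hT' hva hvb q → p = q
  | _, _, .nil, .nil, _ => rfl
  | _, _, .nil, @Walk.cons _ _ _ w _ h q, heq => by
    rw [toT, toT] at heq
    split_ifs at heq <;> injection heq
  | _, _, @Walk.cons _ _ _ w _ h p, .nil, heq => by
    rw [toT, toT] at heq
    split_ifs at heq <;> injection heq
  | x, y, @Walk.cons _ _ _ w _ h p, @Walk.cons _ _ _ w' _ h' q, heq => by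
    rw [toT, toT] at heq
    split_ifs at heq with hadj hadj'
    · -- both old edges
      have hww : w.1 = w'.1 := by injection heq
      have hww' : w = w' := Subtype.ext hww
      subst hww'
      have hpq : toT hT' hva hvb p = toT hT' hva hvb q := by injection heq
      rw [toT_injective p q hpq]
    · have : w.1 = v := by injection heq
      exact absurd this w.2
    · have : v = w'.1 := by injection heq
      exact absurd this.symm w'.2
    · injection heq with e1 e2 e3 hinner
      injection hinner with f1 f2 f3 hrest
      have hww' : w = w' := Subtype.ext f2
      subst hww'
      have hpq : toT hT' hva hvb p = toT hT' hva hvb q := eq_of_heq hrest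
      rw [toT_injective p q hpq]

include hT' in
lemma reachable' (hdeg : ∀ u : V, T.Adj v u → u = a ∨ u = b) :
    ∀ (n : ℕ) {x y : V} (p : T.Walk x y), p.length ≤ n → ∀ (hx : x ≠ v) (hy : y ≠ v),
      T'.Reachable ⟨x, hx⟩ ⟨y, hy⟩ := by
  intro n
  induction n with
  | zero =>
    intro x y p hl hx hy
    cases p with
    | nil => exact Reachable.refl _
    | cons h q => simp [Walk.length_cons] at hl
  | succ n ih =>
    intro x y p hl hx hy
    cases p with
    | nil => exact Reachable.refl _
    | cons h q =>
      rename_i w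
      by_cases hw : w = v
      · cases q with
        | nil => exact absurd hw hy
        | cons h' q' =>
          rename_i w'
          rw [hw] at h h'
          have hw' : w' ≠ v := h'.ne'
          have hl' : q'.length ≤ n := by
            simp only [Walk.length_cons] at hl; omega
          by_cases hxw' : x = w'
          · subst hxw'
            exact ih q' hl' hx hy
          · have hadj : T'.Adj ⟨x, hx⟩ ⟨w', hw'⟩ := by
              rw [hT']
              rcases hdeg x h.symm with rfl | rfl <;> rcases hdeg w' h' with rfl | rfl
              · exact absurd rfl hxw'
              · exact Or.inr (Or.inl ⟨rfl, rfl⟩)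
              · exact Or.inr (Or.inr ⟨rfl, rfl⟩)
              · exact absurd rfl hxw'
            exact hadj.reachable.trans (ih q' hl' hw' hy)
      · have hadj : T'.Adj ⟨x, hx⟩ ⟨w, hw⟩ := (hT' _ _).mpr (Or.inl h)
        have hl' : q.length ≤ n := by simp only [Walk.length_cons] at hl; omega
        exact hadj.reachable.trans (ih q hl' hw hy)

include hva hvb in
lemma not_adj_ab (hac : T.IsAcyclic) (hab : a ≠ b) : ¬ T.Adj a b := by
  intro h
  have h1 : (Walk.cons h Walk.nil).IsPath := by
    simp [Walk.cons_isPath_iff, hab]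
  have h2 : (Walk.cons hva.symm (Walk.cons hvb Walk.nil)).IsPath := by
    simp [Walk.cons_isPath_iff, hva.ne', hvb.ne, hab]
  have heq := hac.path_unique (⟨_, h1⟩ : T.Path a b) ⟨_, h2⟩
  have := congrArg (fun p : T.Path a b => p.1.length) heq
  simp [Walk.length_cons] at this

include hT' hva hvb in
lemma leaf_iff (hdeg : ∀ u : V, T.Adj v u → u = a ∨ u = b) (hab : a ≠ b)
    (hnab : ¬ T.Adj a b) (u : {u : V // u ≠ v}) :
    T'.IsLeaf u ↔ T.IsLeaf u.1 := by
  classical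
  have ha : a ≠ v := hva.ne'
  have hb : b ≠ v := hvb.ne'
  constructor
  · rintro ⟨n, hn, hun⟩
    by_cases hua : u.1 = a
    · refine ⟨v, by rw [hua]; exact hva.symm, ?_⟩
      intro m hm
      by_contra hmv
      have hmem : T'.Adj u ⟨m, hmv⟩ := (hT' _ _).mpr (Or.inl hm)
      have hbadj : T'.Adj u ⟨b, hb⟩ := (hT' _ _).mpr (Or.inr (Or.inl ⟨hua, rfl⟩))
      have hmb : m = b :=
        congrArg Subtype.val ((hun _ hmem).trans (hun _ hbadj).symm)
      apply hnab
      rw [← hua, ← hmb]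
      exact hm
    · by_cases hub : u.1 = b
      · refine ⟨v, by rw [hub]; exact hvb.symm, ?_⟩
        intro m hm
        by_contra hmv
        have hmem : T'.Adj u ⟨m, hmv⟩ := (hT' _ _).mpr (Or.inl hm)
        have haadj : T'.Adj u ⟨a, ha⟩ := (hT' _ _).mpr (Or.inr (Or.inr ⟨hub, rfl⟩))
        have hma : m = a :=
          congrArg Subtype.val ((hun _ hmem).trans (hun _ haadj).symm)
        apply hnab
        rw [← hub, ← hma]
        exact hm.symm
      · have hnadj : T.Adj u.1 n.1 := by
          rcases (hT' u n).mp hn with h | ⟨h1, _⟩ | ⟨h1, _⟩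
          · exact h
          · exact absurd h1 hua
          · exact absurd h1 hub
        refine ⟨n.1, hnadj, ?_⟩
        intro m hm
        have hmv : m ≠ v := by
          rintro rfl
          rcases hdeg u.1 hm.symm with h | h
          · exact hua h
          · exact hub h
        exact congrArg Subtype.val (hun ⟨m, hmv⟩ ((hT' u ⟨m, hmv⟩).mpr (Or.inl hm)))
  · rintro ⟨n, hn, hun⟩
    by_cases hua : u.1 = a
    · have hnv : n = v := (hun v (by rw [hua]; exact hva.symm)).symm
      refine ⟨⟨b, hb⟩, (hT' _ _).mpr (Or.inr (Or.inl ⟨hua, rfl⟩)), ?_⟩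
      intro z hz
      rcases (hT' u z).mp hz with h | ⟨_, h2⟩ | ⟨h1, _⟩
      · exact absurd ((hun _ h).trans hnv) z.2
      · exact Subtype.ext h2
      · rw [hua] at h1; exact absurd h1 hab
    · by_cases hub : u.1 = b
      · have hnv : n = v := (hun v (by rw [hub]; exact hvb.symm)).symm
        refine ⟨⟨a, ha⟩, (hT' _ _).mpr (Or.inr (Or.inr ⟨hub, rfl⟩)), ?_⟩
        intro z hz
        rcases (hT' u z).mp hz with h | ⟨h1, _⟩ | ⟨_, h2⟩
        · exact absurd ((hun _ h).trans hnv) z.2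
        · rw [hub] at h1; exact absurd h1.symm hab
        · exact Subtype.ext h2
      · have hnv : n ≠ v := by
          rintro rfl
          rcases hdeg u.1 hn.symm with h | h
          · exact hua h
          · exact hub h
        refine ⟨⟨n, hnv⟩, (hT' _ _).mpr (Or.inl hn), ?_⟩
        intro z hz
        rcases (hT' u z).mp hz with h | ⟨h1, _⟩ | ⟨h1, _⟩
        · exact Subtype.ext (hun _ h)
        · exact absurd h1 hua
        · exact absurd h1 hub

end Aux

/-- suppressing a degree-2 vertex does not change the Fitch graph.
Let `v` be a vertex of the tree `T` of degree exactly 2 with neighbours `a` and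
`b`, let `T'` be obtained from `T` by deleting `v` (together with the edges
`{v,a}`, `{v,b}`) and adding the edge `{a,b}`, and let `lam'` agree with `lam`
on the old edges while labelling the new edge `{a,b}` by `1` iff `{v,a}` or
`{v,b}` is labelled `1`.  Then `T'` is a tree with the same leaves as `T`, and
the Fitch graph explained by `(T', lam')` equals the one explained by
`(T, lam)`. -/
theorem fitch_suppress_degree_two {V : Type*} (T : SimpleGraph V) (hT : T.IsTree)
    (lam : Sym2 V → Bool) (v a b : V) (hab : a ≠ b)
    (hva : T.Adj v a) (hvb : T.Adj v b)
    (hdeg : ∀ u : V, T.Adj v u → u = a ∨ u = b)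
    (T' : SimpleGraph {u : V // u ≠ v})
    (hT' : ∀ x y : {u : V // u ≠ v},
      T'.Adj x y ↔ (T.Adj x.1 y.1 ∨ (x.1 = a ∧ y.1 = b) ∨ (x.1 = b ∧ y.1 = a)))
    (lam' : Sym2 {u : V // u ≠ v} → Bool)
    (hlam'₁ : ∀ x y : {u : V // u ≠ v}, T.Adj x.1 y.1 →
      lam' s(x, y) = lam s(x.1, y.1))
    (hlam'₂ : ∀ (ha : a ≠ v) (hb : b ≠ v),
      lam' s(⟨a, ha⟩, ⟨b, hb⟩) = (lam s(v, a) || lam s(v, b))) :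
    T'.IsTree ∧ (∀ u : {u : V // u ≠ v}, T'.IsLeaf u ↔ T.IsLeaf u.1) ∧
      ∀ (x y : {u : V // u ≠ v}) (hx : T'.IsLeaf x) (hy : T'.IsLeaf y)
        (hx' : T.IsLeaf x.1) (hy' : T.IsLeaf y.1),
        (fitchGraph T' lam').Adj ⟨x, hx⟩ ⟨y, hy⟩ ↔
          (fitchGraph T lam).Adj ⟨x.1, hx'⟩ ⟨y.1, hy'⟩ := by
  classical
  have ha : a ≠ v := hva.ne'
  have hb : b ≠ v := hvb.ne'
  have hnab : ¬ T.Adj a b := not_adj_ab hva hvb hT.IsAcyclic hab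
  have htree' : T'.IsTree := by
    constructor
    · rw [connected_iff]
      refine ⟨fun x y => ?_, ⟨⟨a, ha⟩⟩⟩
      obtain ⟨p⟩ := hT.isConnected.preconnected x.1 y.1
      exact reachable' hT' hdeg p.length p le_rfl x.2 y.2
    · apply isAcyclic_of_path_unique
      intro c d p q
      have hp := toT_isPath hT' hva hvb p.1 p.2
      have hq := toT_isPath hT' hva hvb q.1 q.2
      have huniq := hT.IsAcyclic.path_unique ⟨_, hp⟩ ⟨_, hq⟩
      have heq : toT hT' hva hvb p.1 = toT hT' hva hvb q.1 :=
        congrArg Subtype.val huniq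
      exact Subtype.ext (toT_injective hT' hva hvb p.1 q.1 heq)
  refine ⟨htree', fun u => leaf_iff hT' hva hvb hdeg hab hnab u, ?_⟩
  intro x y hx hy hx' hy'
  constructor
  · rintro ⟨hne, p, hp, hl⟩
    refine ⟨?_, toT hT' hva hvb p, toT_isPath hT' hva hvb p hp, ?_⟩
    · intro hcontr
      have h1 : x.1 = y.1 := congrArg (Subtype.val : {w : V // T.IsLeaf w} → V) hcontr
      exact hne (Subtype.ext (Subtype.ext h1))
    · exact (toT_label_iff hT' hva hvb lam lam' hlam'₁ hlam'₂ p).mp hl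
  · rintro ⟨hne, q, hq, hl⟩
    obtain ⟨w0⟩ := htree'.isConnected.preconnected x y
    have hp : w0.bypass.IsPath := SimpleGraph.Walk.bypass_isPath w0
    have hpath := toT_isPath hT' hva hvb w0.bypass hp
    have huniq := hT.IsAcyclic.path_unique ⟨_, hpath⟩ (⟨q, hq⟩ : T.Path x.1 y.1)
    have heq : toT hT' hva hvb w0.bypass = q := congrArg Subtype.val huniq
    refine ⟨?_, w0.bypass, hp, ?_⟩
    · intro hc
      have h1 : x = y := congrArg Subtype.val hc
      exact hne (Subtype.ext (congrArg (Subtype.val : {u : V // u ≠ v} → V) h1))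
    · apply (toT_label_iff hT' hva hvb lam lam' hlam'₁ hlam'₂ w0.bypass).mpr
      rw [heq]
      exact hl
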